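/- Let R be a unique factorization domain, let x ∈ R be a prime element, and let w be a positive integer. Then x·T^w − 1 is a prime element of the polynomial ring R[T]. -/

import Mathlib

open Polynomial

lemma irreducible_X_pow_sub_C_of_prime
    {R : Type*} [CommRing R] [IsDomain R]
    {x : R} (hx : Prime x) {w : ℕ} (hw : 0 < w) :
    Irreducible ((Polynomial.X : R[X]) ^ w - Polynomial.C x) := by
  have hxne : x ≠ 0 := hx.ne_zero
  have hP : (Ideal.span {x} : Ideal R).IsPrime :=
    (Ideal.span_singleton_prime hxne).mpr hx
  have hdeg : ((X : R[X]) ^ w - C x).degree = w := by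
    rw [degree_sub_eq_left_of_degree_lt]
    · exact degree_X_pow w
    · rw [degree_X_pow]
      exact lt_of_le_of_lt (degree_C_le) (by exact_mod_cast hw)
  have hmonic : ((X : R[X]) ^ w - C x).Monic := by
    exact monic_X_pow_sub_C x hw.ne'
  apply Polynomial.irreducible_of_eisenstein_criterion hP
  · rw [hmonic.leadingCoeff]
    intro h1
    exact hP.ne_top (Ideal.eq_top_of_isUnit_mem _ h1 isUnit_one)
  · intro n hn
    rw [hdeg] at hn
    have hnw : n < w := by exact_mod_cast hn
    rw [coeff_sub, coeff_X_pow, if_neg hnw.ne, coeff_C]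
    split_ifs with h
    · subst h
      simpa using Ideal.mem_span_singleton_self x
    · simp
  · rw [hdeg]; exact_mod_cast hw
  · rw [coeff_sub, coeff_X_pow, if_neg (by omega : ¬(0 = w)), coeff_C, if_pos rfl, zero_sub,
      Ideal.span_singleton_pow, Ideal.mem_span_singleton]
    intro h
    rw [dvd_neg] at h
    obtain ⟨c, hc⟩ := h
    rw [pow_two, mul_assoc] at hc
    nth_rewrite 1 [← mul_one x] at hc
    have := mul_left_cancel₀ hxne hc
    exact hx.not_isUnit (IsUnit.of_mul_eq_one (a := x) c this.symm)
  · exact hmonic.isPrimitive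

/-- if `R` is a UFD and `x ∈ R` is a prime element, then for every positive
integer `w` the polynomial `x·T^w − 1` is a prime element of `R[T]`. -/
theorem prime_C_mul_X_pow_sub_one
    {R : Type*} [CommRing R] [IsDomain R] [UniqueFactorizationMonoid R]
    {x : R} (hx : Prime x) {w : ℕ} (hw : 0 < w) :
    Prime (Polynomial.C x * Polynomial.X ^ w - 1) := by
  have hxne : x ≠ 0 := hx.ne_zero
  set f : R[X] := C x * X ^ w - 1 with hf
  have hdeg : f.degree = w := by
    rw [hf, sub_eq_add_neg, degree_add_eq_left_of_degree_lt]
    · rw [degree_C_mul_X_pow _ hxne]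
    · rw [degree_C_mul_X_pow _ hxne, degree_neg]
      exact lt_of_le_of_lt degree_one_le (by exact_mod_cast hw)
  have hfne : f ≠ 0 := fun h => by simp [h] at hdeg
  have hnatdeg : f.natDegree = w := natDegree_eq_of_degree_eq_some hdeg
  have hcoeff0 : f.coeff 0 = -1 := by
    rw [hf, coeff_sub, coeff_one, coeff_C_mul, coeff_X_pow,
      if_neg (by omega : ¬(0 = w)), if_pos rfl, mul_zero, zero_sub]
  -- reverse of f
  have hrev : f.reverse = C x - X ^ w := by
    rw [reverse, hnatdeg, hf, reflect_sub, reflect_C_mul_X_pow, reflect_one,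
      revAt_le le_rfl, Nat.sub_self, pow_zero, mul_one]
  have hirr' : Irreducible ((X : R[X]) ^ w - C x) :=
    irreducible_X_pow_sub_C_of_prime hx hw
  -- f is irreducible
  have hirr : Irreducible f := by
    constructor
    · intro hu
      have := Polynomial.isUnit_iff.mp hu
      obtain ⟨r, _, hr⟩ := this
      rw [← hr, degree_C (by rintro rfl; simp at hr; exact hfne hr.symm)] at hdeg
      exact (by exact_mod_cast hw.ne' : (w : WithBot ℕ) ≠ 0) hdeg.symm
    · intro p q hpq
      have hc0 : p.coeff 0 * q.coeff 0 = -1 := by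
        rw [← hcoeff0, hpq, mul_coeff_zero]
      have hpu : IsUnit (p.coeff 0) := by
        apply IsUnit.of_mul_eq_one (-(q.coeff 0))
        rw [mul_neg, hc0, neg_neg]
      have hqu : IsUnit (q.coeff 0) := by
        apply IsUnit.of_mul_eq_one (-(p.coeff 0))
        rw [mul_neg, mul_comm, hc0, neg_neg]
      have hp0 : p.coeff 0 ≠ 0 := hpu.ne_zero
      have hq0 : q.coeff 0 ≠ 0 := hqu.ne_zero
      have hrevmul : f.reverse = p.reverse * q.reverse := by
        rw [hpq, reverse_mul_of_domain]
      have : (-(p.reverse)) * q.reverse = X ^ w - C x := by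
        rw [neg_mul, ← hrevmul, hrev, neg_sub]
      have := hirr'.isUnit_or_isUnit this.symm
      have key : ∀ g : R[X], g.coeff 0 ≠ 0 → IsUnit (g.coeff 0) → IsUnit g.reverse → IsUnit g := by
        intro g hg0 hgu hgr
        obtain ⟨r, hru, hr⟩ := Polynomial.isUnit_iff.mp hgr
        have hnd : g.reverse.natDegree = 0 := by rw [← hr, natDegree_C]
        have htd : g.natTrailingDegree = 0 :=
          natTrailingDegree_eq_zero_of_constantCoeff_ne_zero hg0
        have : g.natDegree = 0 := by
          have := g.natDegree_eq_reverse_natDegree_add_natTrailingDegree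
          omega
        rw [Polynomial.eq_C_of_natDegree_eq_zero this]
        exact hgu.map C
      rcases this with h | h
      · exact Or.inl (key p hp0 hpu (by rwa [IsUnit.neg_iff] at h))
      · exact Or.inr (key q hq0 hqu h)
  exact (UniqueFactorizationMonoid.irreducible_iff_prime).mp hirr
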